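/- For every Borel set H ⊆ 2^ω × 2^ω all of whose vertical sections (H)_x = {y : (x,y) ∈ H} are meager, there exists a sequence of Borel sets G_n ⊆ 2^ω × 2^ω such that every vertical section (G_n)_x is a closed nowhere dense subset of 2^ω and H ⊆ ⋃_n G_n. -/

import Mathlib

open Set Filter MeasureTheory

namespace FremlinAux

abbrev C2 := ℕ → Bool

/-- The key invariant: `A` differs from a countable union of measurable rectangles with
open second factors by a countable union of measurable sets with closed nowhere dense
vertical sections. -/
def Good (A : Set (C2 × C2)) : Prop :=
  ∃ (B s : ℕ → Set C2) (N : ℕ → Set (C2 × C2)),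
    (∀ n, MeasurableSet (B n)) ∧ (∀ n, IsOpen (s n)) ∧ (∀ n, MeasurableSet (N n)) ∧
    (∀ n x, IsClosed {y | (x, y) ∈ N n} ∧ IsNowhereDense {y | (x, y) ∈ N n}) ∧
    symmDiff A (⋃ n, B n ×ˢ s n) ⊆ ⋃ n, N n

lemma nwd_meagre {s : Set C2} (h : IsNowhereDense s) : IsMeagre s :=
  isMeagre_iff_countable_union_isNowhereDense.2
    ⟨{s}, by simpa, countable_singleton _, by simp⟩

lemma meagre_union {s t : Set C2} (hs : IsMeagre s) (ht : IsMeagre t) :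
    IsMeagre (s ∪ t) := by
  rw [IsMeagre, compl_union]; exact Filter.inter_mem hs ht

lemma meagre_cover {s : Set C2} (h : IsMeagre s) :
    ∃ F : ℕ → Set C2, (∀ n, IsClosed (F n) ∧ IsNowhereDense (F n)) ∧ s ⊆ ⋃ n, F n := by
  rw [isMeagre_iff_countable_union_isNowhereDense] at h
  obtain ⟨S, hnwd, hc, hsub⟩ := h
  obtain ⟨f, hf⟩ := (hc.insert ∅).exists_eq_range (insert_nonempty _ _)
  refine ⟨fun n => closure (f n), fun n => ?_, ?_⟩
  · have hfn : f n ∈ insert ∅ S := hf ▸ mem_range_self n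
    have hn : IsNowhereDense (f n) := by
      rcases hfn with h | h
      · simp [h]
      · exact hnwd _ h
    exact ⟨isClosed_closure, hn.closure⟩
  · intro y hy
    obtain ⟨t, htS, hyt⟩ := hsub hy
    have ht : t ∈ insert ∅ S := mem_insert_of_mem _ htS
    rw [hf] at ht
    obtain ⟨n, rfl⟩ := ht
    exact mem_iUnion.2 ⟨n, subset_closure hyt⟩

lemma baire_prop {B : Set C2} (hB : MeasurableSet B) :
    ∃ V, IsOpen V ∧ IsMeagre (symmDiff B V) := by
  obtain ⟨V, hVo, hBV⟩ := hB.residualEq_isOpen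
  refine ⟨V, hVo, ?_⟩
  rw [Filter.eventuallyEq_set] at hBV
  have h : ∀ᶠ y in residual C2, y ∈ (symmDiff B V)ᶜ := by
    filter_upwards [hBV] with y hy
    simp only [Set.mem_compl_iff, Set.mem_symmDiff]
    tauto
  exact h

lemma good_empty : Good ∅ := by
  refine ⟨fun _ => ∅, fun _ => ∅, fun _ => ∅, fun _ => MeasurableSet.empty,
    fun _ => isOpen_empty, fun _ => MeasurableSet.empty, ?_, ?_⟩
  · intro n x
    have : {y : C2 | (x, y) ∈ (∅ : Set (C2 × C2))} = ∅ := by ext y; simp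
    rw [this]; exact ⟨isClosed_empty, isNowhereDense_empty⟩
  · intro p hp
    rcases Set.mem_symmDiff.1 hp with ⟨h, -⟩ | ⟨h, -⟩
    · exact absurd h (notMem_empty p)
    · simp at h

lemma good_rect {A B : Set C2} (hA : MeasurableSet A) (hB : MeasurableSet B) :
    Good (A ×ˢ B) := by
  obtain ⟨V, hVo, hm⟩ := baire_prop hB
  obtain ⟨F, hF, hFsub⟩ := meagre_cover hm
  refine ⟨fun _ => A, fun _ => V, fun n => univ ×ˢ F n, fun _ => hA, fun _ => hVo,
    fun n => MeasurableSet.univ.prod (hF n).1.measurableSet, ?_, ?_⟩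
  · intro n x
    have h : {y | (x, y) ∈ (univ : Set C2) ×ˢ F n} = F n := by ext y; simp
    rw [h]; exact hF n
  · intro p hp
    have h1 : (⋃ _ : ℕ, A ×ˢ V) = A ×ˢ V := iUnion_const _
    rw [h1] at hp
    have h2 : p.2 ∈ symmDiff B V := by
      rcases Set.mem_symmDiff.1 hp with ⟨h, h'⟩ | ⟨h, h'⟩
      · exact Set.mem_symmDiff.2 (Or.inl ⟨h.2, fun hv => h' ⟨h.1, hv⟩⟩)
      · exact Set.mem_symmDiff.2 (Or.inr ⟨h.2, fun hv => h' ⟨h.1, hv⟩⟩)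
    obtain ⟨n, hn⟩ := mem_iUnion.1 (hFsub h2)
    exact mem_iUnion.2 ⟨n, ⟨trivial, hn⟩⟩

lemma good_iUnion {f : ℕ → Set (C2 × C2)} (hf : ∀ k, Good (f k)) : Good (⋃ k, f k) := by
  choose B s N hB hs hN hsect hsub using hf
  let π : ℕ ≃ ℕ × ℕ := (Denumerable.eqv (ℕ × ℕ)).symm
  refine ⟨fun m => B (π m).1 (π m).2, fun m => s (π m).1 (π m).2,
    fun m => N (π m).1 (π m).2, fun m => hB _ _, fun m => hs _ _, fun m => hN _ _,
    fun m => hsect _ _, ?_⟩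
  have hU : (⋃ m, B (π m).1 (π m).2 ×ˢ s (π m).1 (π m).2)
      = ⋃ k, ⋃ n, B k n ×ˢ s k n := by
    ext p
    simp only [mem_iUnion]
    constructor
    · rintro ⟨m, hm⟩; exact ⟨(π m).1, (π m).2, hm⟩
    · rintro ⟨k, n, h⟩; exact ⟨π.symm (k, n), by simpa using h⟩
  have hNU : (⋃ m, N (π m).1 (π m).2) = ⋃ k, ⋃ n, N k n := by
    ext p
    simp only [mem_iUnion]
    constructor
    · rintro ⟨m, hm⟩; exact ⟨(π m).1, (π m).2, hm⟩
    · rintro ⟨k, n, h⟩; exact ⟨π.symm (k, n), by simpa using h⟩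
  rw [hU, hNU]
  intro p hp
  rcases Set.mem_symmDiff.1 hp with ⟨hp1, hp2⟩ | ⟨hp1, hp2⟩
  · obtain ⟨k, hk⟩ := mem_iUnion.1 hp1
    have h : p ∈ symmDiff (f k) (⋃ n, B k n ×ˢ s k n) :=
      Set.mem_symmDiff.2 (Or.inl ⟨hk, fun h => hp2 (mem_iUnion.2 ⟨k, h⟩)⟩)
    exact mem_iUnion.2 ⟨k, hsub k h⟩
  · obtain ⟨k, hk⟩ := mem_iUnion.1 hp1
    have h : p ∈ symmDiff (f k) (⋃ n, B k n ×ˢ s k n) :=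
      Set.mem_symmDiff.2 (Or.inr ⟨hk, fun h => hp2 (mem_iUnion.2 ⟨k, h⟩)⟩)
    exact mem_iUnion.2 ⟨k, hsub k h⟩

lemma good_compl {A : Set (C2 × C2)} (hA : Good A) : Good Aᶜ := by
  classical
  obtain ⟨B, s, N, hB, hs, hN, hsect, hsub⟩ := hA
  obtain ⟨b, hbc, -, hbasis⟩ := TopologicalSpace.exists_countable_basis C2
  obtain ⟨e, he⟩ := (hbc.insert ∅).exists_eq_range (insert_nonempty _ _)
  have heo : ∀ k, IsOpen (e k) := by
    intro k
    have h : e k ∈ insert ∅ b := he ▸ mem_range_self k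
    rcases h with h | h
    · rw [h]; exact isOpen_empty
    · exact hbasis.isOpen h
  set U : Set (C2 × C2) := ⋃ n, B n ×ˢ s n with hUdef
  have hUmeas : MeasurableSet U :=
    MeasurableSet.iUnion fun n => (hB n).prod (hs n).measurableSet
  set B' : ℕ → Set C2 := fun k => ⋂ n ∈ {n | (s n ∩ e k).Nonempty}, (B n)ᶜ with hB'def
  set V : Set (C2 × C2) := ⋃ k, B' k ×ˢ e k with hVdef
  have hB'meas : ∀ k, MeasurableSet (B' k) :=
    fun k => MeasurableSet.biInter (to_countable _) fun n _ => (hB n).compl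
  have hVmeas : MeasurableSet V :=
    MeasurableSet.iUnion fun k => (hB'meas k).prod (heo k).measurableSet
  have hUopen : ∀ x, IsOpen {y | (x, y) ∈ U} := by
    intro x
    have h : {y | (x, y) ∈ U} = ⋃ n ∈ {n | x ∈ B n}, s n := by
      ext y
      simp only [hUdef, mem_setOf_eq, mem_iUnion, Set.mem_prod, exists_prop]
      try rfl
    rw [h]
    exact isOpen_biUnion fun n _ => hs n
  have hVsect : ∀ x, {y | (x, y) ∈ V} = interior {y | (x, y) ∈ U}ᶜ := by
    intro x
    apply Subset.antisymm
    · intro y hy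
      obtain ⟨k, hk⟩ := mem_iUnion.1 hy
      have hxk : x ∈ B' k := hk.1
      have hek : e k ⊆ {y | (x, y) ∈ U}ᶜ := by
        intro z hz hzU
        obtain ⟨n, hn⟩ := mem_iUnion.1 hzU
        have hmem : n ∈ {n | (s n ∩ e k).Nonempty} := ⟨z, hn.2, hz⟩
        exact (mem_iInter₂.1 hxk n hmem) hn.1
      exact interior_maximal hek (heo k) hk.2
    · intro y hy
      obtain ⟨v, hvb, hyv, hvsub⟩ :=
        hbasis.exists_subset_of_mem_open hy isOpen_interior
      have hvr : v ∈ insert ∅ b := mem_insert_of_mem _ hvb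
      rw [he] at hvr
      obtain ⟨k, rfl⟩ := hvr
      refine mem_iUnion.2 ⟨k, ⟨?_, hyv⟩⟩
      refine mem_iInter₂.2 fun n hn hxB => ?_
      obtain ⟨z, hzs, hze⟩ := hn
      have hzU : z ∈ {y | (x, y) ∈ U} := mem_iUnion.2 ⟨n, ⟨hxB, hzs⟩⟩
      exact (interior_subset (hvsub hze)) hzU
  have hVsub : V ⊆ Uᶜ := by
    intro p hp hpU
    have h1 : p.2 ∈ interior {y | (p.1, y) ∈ U}ᶜ := by
      rw [← hVsect]; exact hp
    exact (interior_subset h1) hpU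
  have nwd_aux : ∀ x, IsClosed {y | (x, y) ∈ Uᶜ \ V} ∧
      IsNowhereDense {y | (x, y) ∈ Uᶜ \ V} := by
    intro x
    have hsect' : {y | (x, y) ∈ Uᶜ \ V}
        = {y | (x, y) ∈ U}ᶜ \ interior {y | (x, y) ∈ U}ᶜ := by
      rw [← hVsect x]; rfl
    have hC : IsClosed ({y | (x, y) ∈ U}ᶜ) := (hUopen x).isClosed_compl
    have hcl : IsClosed ({y | (x, y) ∈ U}ᶜ \ interior {y | (x, y) ∈ U}ᶜ) :=
      hC.sdiff isOpen_interior
    rw [hsect']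
    refine ⟨hcl, hcl.isNowhereDense_iff.2 ?_⟩
    apply eq_empty_iff_forall_notMem.2
    intro y hy
    have h1 : interior ({y | (x, y) ∈ U}ᶜ \ interior {y | (x, y) ∈ U}ᶜ)
        ⊆ interior {y | (x, y) ∈ U}ᶜ := interior_mono diff_subset
    exact (interior_subset hy).2 (h1 hy)
  refine ⟨B', e, fun m => Nat.rec (Uᶜ \ V) (fun n _ => N n) m, hB'meas, heo, ?_, ?_, ?_⟩
  · intro m
    cases m with
    | zero => exact hUmeas.compl.diff hVmeas
    | succ n => exact hN n
  · intro m x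
    cases m with
    | zero => exact nwd_aux x
    | succ n => exact hsect n x
  · intro p hp
    rcases Set.mem_symmDiff.1 hp with ⟨hp1, hp2⟩ | ⟨hp1, hp2⟩
    · by_cases hU : p ∈ U
      · have h : p ∈ symmDiff A U := Set.mem_symmDiff.2 (Or.inr ⟨hU, hp1⟩)
        obtain ⟨n, hn⟩ := mem_iUnion.1 (hsub h)
        exact mem_iUnion.2 ⟨n + 1, hn⟩
      · exact mem_iUnion.2 ⟨0, ⟨hU, hp2⟩⟩
    · have hpA : p ∈ A := not_not.1 hp2
      have hpU : p ∉ U := hVsub hp1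
      have h : p ∈ symmDiff A U := Set.mem_symmDiff.2 (Or.inl ⟨hpA, hpU⟩)
      obtain ⟨n, hn⟩ := mem_iUnion.1 (hsub h)
      exact mem_iUnion.2 ⟨n + 1, hn⟩

end FremlinAux

theorem fremlin_representation
    (H : Set ((ℕ → Bool) × (ℕ → Bool))) (hH : MeasurableSet H)
    (hmeager : ∀ x : ℕ → Bool, IsMeagre {y | (x, y) ∈ H}) :
    ∃ G : ℕ → Set ((ℕ → Bool) × (ℕ → Bool)),
      (∀ n, MeasurableSet (G n)) ∧
      (∀ n x, IsClosed {y | (x, y) ∈ G n} ∧ IsNowhereDense {y | (x, y) ∈ G n}) ∧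
      H ⊆ ⋃ n, G n := by
  open FremlinAux in
  have hgen : MeasurableSet[MeasurableSpace.generateFrom
      (Set.image2 (· ×ˢ ·) {s : Set (ℕ → Bool) | MeasurableSet s}
        {t : Set (ℕ → Bool) | MeasurableSet t})] H := by
    rw [generateFrom_prod]; exact hH
  have hGood : FremlinAux.Good H := by
    refine MeasurableSpace.generateFrom_induction _ (fun s _ => FremlinAux.Good s)
      ?_ ?_ ?_ ?_ H hgen
    · rintro t ⟨A, hA, B, hB, rfl⟩ -
      exact FremlinAux.good_rect hA hB
    · exact FremlinAux.good_empty
    · intro t ht h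
      exact FremlinAux.good_compl h
    · intro f hf h
      exact FremlinAux.good_iUnion h
  obtain ⟨B, s, N, hB, hs, hN, hsect, hsub⟩ := hGood
  refine ⟨N, hN, hsect, ?_⟩
  have hUempty : ∀ x : ℕ → Bool, {y | (x, y) ∈ ⋃ n, B n ×ˢ s n} = ∅ := by
    intro x
    have hopen : IsOpen {y | (x, y) ∈ ⋃ n, B n ×ˢ s n} := by
      have h : {y | (x, y) ∈ ⋃ n, B n ×ˢ s n} = ⋃ n ∈ {n | x ∈ B n}, s n := by
        ext y
        simp only [mem_setOf_eq, mem_iUnion, Set.mem_prod, exists_prop]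
        try rfl
      rw [h]
      exact isOpen_biUnion fun n _ => hs n
    have hmeag : IsMeagre {y | (x, y) ∈ ⋃ n, B n ×ˢ s n} := by
      have h1 : {y | (x, y) ∈ ⋃ n, B n ×ˢ s n}
          ⊆ {y | (x, y) ∈ H} ∪ ⋃ n, {y | (x, y) ∈ N n} := by
        intro y hy
        by_cases hHp : (x, y) ∈ H
        · exact Or.inl hHp
        · have h : (x, y) ∈ symmDiff H (⋃ n, B n ×ˢ s n) :=
            Set.mem_symmDiff.2 (Or.inr ⟨hy, hHp⟩)
          obtain ⟨n, hn⟩ := Set.mem_iUnion.1 (hsub h)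
          exact Or.inr (Set.mem_iUnion.2 ⟨n, hn⟩)
      refine IsMeagre.mono h1 ?_
      exact FremlinAux.meagre_union (hmeager x)
        (isMeagre_iUnion fun n => FremlinAux.nwd_meagre (hsect n x).2)
    apply eq_empty_iff_forall_notMem.2
    intro y hy
    have hd : Dense ({y | (x, y) ∈ ⋃ n, B n ×ˢ s n}ᶜ) := dense_of_mem_residual hmeag
    obtain ⟨z, hz1, hz2⟩ := hd.inter_open_nonempty _ hopen ⟨y, hy⟩
    exact hz2 hz1
  intro p hp
  by_cases hU : p ∈ ⋃ n, B n ×ˢ s n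
  · exact absurd (show p.2 ∈ {y | (p.1, y) ∈ ⋃ n, B n ×ˢ s n} from hU)
      (by rw [hUempty p.1]; exact notMem_empty _)
  · exact hsub (Set.mem_symmDiff.2 (Or.inl ⟨hp, hU⟩))
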